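/- Let f ∈ L¹(𝕋), r ∈ ℕ, ϱ ∈ [0,1), x ∈ 𝕋. Then A_{ϱ,r}(f)(x) = ∑_{k=0}^{r-1} (∂^k f(ϱ,x)/∂ϱ^k) · (1-ϱ)^k / k!, where f(ϱ,x) is the Poisson integral of f. -/

import Mathlib

open MeasureTheory Real AddCircle
open scoped ENNReal

noncomputable section

instance : Fact (0 < 2 * π) := ⟨by positivity⟩

/-- The Taylor–Abel–Poisson multipliers `λ_{k,r}(ϱ)`. -/
def lam (r k : ℕ) (ρ : ℝ) : ℝ :=
  if k < r then 1 else ∑ j ∈ Finset.range r, (k.choose j : ℝ) * (1 - ρ) ^ j * ρ ^ (k - j)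

/-- The Poisson integral `f(ϱ,x) = ∑_{k∈ℤ} ϱ^{|k|} f̂_k e^{ikx}`. -/
def poissonIntegral (f : AddCircle (2 * π) → ℂ) (ρ : ℝ) (x : AddCircle (2 * π)) : ℂ :=
  ∑' k : ℤ, ((ρ ^ k.natAbs : ℝ) : ℂ) * fourierCoeff f k * fourier k x

/-- `∂^r f(ϱ,x)/∂ϱ^r`, the `r`-th derivative of the Poisson integral in the radial variable. -/
def pderivR (r : ℕ) (f : AddCircle (2 * π) → ℂ) (ρ : ℝ) (x : AddCircle (2 * π)) : ℂ :=
  iteratedDeriv r (fun t : ℝ => poissonIntegral f t x) ρ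

/-- The Taylor–Abel–Poisson mean `A_{ϱ,r}(f)`. -/
def ATAP (r : ℕ) (ρ : ℝ) (f : AddCircle (2 * π) → ℂ) (x : AddCircle (2 * π)) : ℂ :=
  ∑' k : ℤ, ((lam r k.natAbs ρ : ℝ) : ℂ) * fourierCoeff f k * fourier k x

/-- `g` is the radial derivative of order `n` of `f`:  `ĝ_k = (|k|!/(|k|-n)!) f̂_k` for
`|k| ≥ n` and `ĝ_k = 0` otherwise. -/
def HasRadialDeriv (f g : AddCircle (2 * π) → ℂ) (n : ℕ) : Prop :=
  Integrable g haarAddCircle ∧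
  ∀ k : ℤ, fourierCoeff g k =
    if n ≤ k.natAbs then ((k.natAbs.descFactorial n : ℕ) : ℂ) * fourierCoeff f k else 0

/-- `M_p(ϱ,f,r) = ϱ^r ‖∂^r f(ϱ,·)/∂ϱ^r‖_p`. -/
def Mp (p : ℝ≥0∞) (ρ : ℝ) (f : AddCircle (2 * π) → ℂ) (r : ℕ) : ℝ≥0∞ :=
  ENNReal.ofReal (ρ ^ r) * eLpNorm (fun x => pderivR r f ρ x) p haarAddCircle

/-- The K-functional `K_n(δ,f)_p` generated by the radial derivative of order `n`. -/
def Kfun (n : ℕ) (δ : ℝ) (f : AddCircle (2 * π) → ℂ) (p : ℝ≥0∞) : ℝ≥0∞ :=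
  ⨅ (h : AddCircle (2 * π) → ℂ) (g : AddCircle (2 * π) → ℂ)
    (_ : MemLp g p haarAddCircle) (_ : HasRadialDeriv h g n),
    eLpNorm (f - h) p haarAddCircle + ENNReal.ofReal (δ ^ n) * eLpNorm g p haarAddCircle

/-! ### Auxiliary lemmas -/

lemma aux_summable_nat (j : ℕ) {b : ℝ} (hb0 : 0 < b) (hb1 : b < 1) :
    Summable (fun n : ℕ => (n.descFactorial j : ℝ) * b ^ (n - j)) := by
  have h := (summable_pow_mul_geometric_of_norm_lt_one (R := ℝ) j
    (by rwa [Real.norm_eq_abs, abs_of_pos hb0])).mul_right ((b ^ j)⁻¹)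
  refine Summable.of_nonneg_of_le (fun n => by positivity) (fun n => ?_) h
  have h1 : (n.descFactorial j : ℝ) ≤ (n : ℝ) ^ j := by
    exact_mod_cast Nat.cast_le.2 (Nat.descFactorial_le_pow n j)
  have h2 : b ^ (n - j) ≤ b ^ n * (b ^ j)⁻¹ := by
    rw [le_mul_inv_iff₀ (by positivity), ← pow_add]
    exact pow_le_pow_of_le_one hb0.le hb1.le le_tsub_add
  calc (n.descFactorial j : ℝ) * b ^ (n - j) ≤ (n : ℝ) ^ j * (b ^ n * (b ^ j)⁻¹) := by
        apply mul_le_mul h1 h2 (by positivity) (by positivity)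
    _ = (n : ℝ) ^ j * b ^ n * (b ^ j)⁻¹ := by ring

lemma aux_summable (M : ℝ) (j : ℕ) {b : ℝ} (hb0 : 0 < b) (hb1 : b < 1) :
    Summable (fun k : ℤ => M * ((k.natAbs.descFactorial j : ℝ) * b ^ (k.natAbs - j))) := by
  have h := (aux_summable_nat j hb0 hb1).mul_left M
  refine Summable.of_nat_of_neg ?_ ?_ <;> simpa using h

lemma aux_norm_le (c : ℤ → ℂ) (M : ℝ) (hM : ∀ k, ‖c k‖ ≤ M) (j : ℕ) (k : ℤ) {y b : ℝ}
    (hyb : |y| ≤ b) (hb0 : 0 ≤ b) :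
    ‖((k.natAbs.descFactorial j : ℝ) * y ^ (k.natAbs - j)) • c k‖
      ≤ M * ((k.natAbs.descFactorial j : ℝ) * b ^ (k.natAbs - j)) := by
  rw [norm_smul, Real.norm_eq_abs, abs_mul, abs_pow,
    abs_of_nonneg (by positivity : (0:ℝ) ≤ (k.natAbs.descFactorial j : ℝ))]
  have h1 : |y| ^ (k.natAbs - j) ≤ b ^ (k.natAbs - j) :=
    pow_le_pow_left₀ (abs_nonneg y) hyb _
  calc (k.natAbs.descFactorial j : ℝ) * |y| ^ (k.natAbs - j) * ‖c k‖
      ≤ (k.natAbs.descFactorial j : ℝ) * b ^ (k.natAbs - j) * M := by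
        apply mul_le_mul (by apply mul_le_mul_of_nonneg_left h1 (by positivity))
          (hM k) (norm_nonneg _) (by positivity)
    _ = M * ((k.natAbs.descFactorial j : ℝ) * b ^ (k.natAbs - j)) := by ring

/-- Term-by-term differentiation of the power series `∑ s^{|k|} c k` on `(-1, 1)`. -/
lemma key_deriv (c : ℤ → ℂ) (M : ℝ) (hM : ∀ k, ‖c k‖ ≤ M) (j : ℕ) :
    ∀ t : ℝ, |t| < 1 →
      iteratedDeriv j (fun s : ℝ => ∑' k : ℤ, s ^ k.natAbs • c k) t
        = ∑' k : ℤ, ((k.natAbs.descFactorial j : ℝ) * t ^ (k.natAbs - j)) • c k := by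
  induction j with
  | zero => intro t _; simp
  | succ j IH =>
    intro t ht
    set b : ℝ := (|t| + 1) / 2 with hb
    have htb : |t| < b := by rw [hb]; linarith
    have hb0 : 0 < b := lt_of_le_of_lt (abs_nonneg t) htb
    have hb1 : b < 1 := by rw [hb]; linarith
    have hmem : ∀ y : ℝ, y ∈ Metric.ball (0:ℝ) b ↔ |y| < b := by
      intro y; rw [Metric.mem_ball, Real.dist_eq, sub_zero]
    rw [iteratedDeriv_succ]
    have heq : deriv (iteratedDeriv j (fun s : ℝ => ∑' k : ℤ, s ^ k.natAbs • c k)) t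
        = deriv (fun s : ℝ =>
            ∑' k : ℤ, ((k.natAbs.descFactorial j : ℝ) * s ^ (k.natAbs - j)) • c k) t := by
      apply Filter.EventuallyEq.deriv_eq
      filter_upwards [Metric.ball_mem_nhds t (show (0:ℝ) < 1 - |t| by linarith)] with y hy
      apply IH
      rw [Metric.mem_ball, Real.dist_eq] at hy
      calc |y| = |y - t + t| := by ring_nf
        _ ≤ |y - t| + |t| := abs_add_le _ _
        _ < (1 - |t|) + |t| := by linarith
        _ = 1 := by ring
    rw [heq]
    have hD : HasDerivAt
        (fun s : ℝ => ∑' k : ℤ, ((k.natAbs.descFactorial j : ℝ) * s ^ (k.natAbs - j)) • c k)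
        (∑' k : ℤ, ((k.natAbs.descFactorial (j+1) : ℝ) * t ^ (k.natAbs - (j+1))) • c k) t := by
      refine hasDerivAt_tsum_of_isPreconnected
        (aux_summable M (j+1) hb0 hb1) Metric.isOpen_ball
        ((convex_ball _ _).isPreconnected)
        (g' := fun k y => ((k.natAbs.descFactorial (j+1) : ℝ) * y ^ (k.natAbs - (j+1))) • c k)
        (fun k y _ => ?_) (fun k y hy => aux_norm_le c M hM (j+1) k ((hmem y).1 hy).le hb0.le)
        ((hmem t).2 htb)
        (Summable.of_norm_bounded (aux_summable M j hb0 hb1)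
          (fun k => aux_norm_le c M hM j k htb.le hb0.le)) ((hmem t).2 htb)
      have h := ((hasDerivAt_pow (k.natAbs - j) y).const_mul
        ((k.natAbs.descFactorial j : ℝ))).smul_const (c k)
      convert h using 2
      rw [Nat.descFactorial_succ, ← Nat.sub_sub]
      push_cast
      ring
    exact hD.deriv

lemma lam_eq (r m : ℕ) (ρ : ℝ) :
    lam r m ρ
      = ∑ j ∈ Finset.range r,
          (m.descFactorial j : ℝ) * ρ ^ (m - j) * ((1 - ρ) ^ j / (j.factorial : ℝ)) := by
  have hterm : ∀ j : ℕ,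
      (m.descFactorial j : ℝ) * ρ ^ (m - j) * ((1 - ρ) ^ j / (j.factorial : ℝ))
        = (m.choose j : ℝ) * (1 - ρ) ^ j * ρ ^ (m - j) := by
    intro j
    rw [Nat.descFactorial_eq_factorial_mul_choose]
    have : (j.factorial : ℝ) ≠ 0 := Nat.cast_ne_zero.2 j.factorial_ne_zero
    push_cast
    field_simp
  rw [Finset.sum_congr rfl (fun j _ => hterm j), lam]
  split_ifs with h
  · rw [← Finset.sum_subset (Finset.range_subset_range.2 h)
      (fun j _ hj => by
        rw [Finset.mem_range, not_lt] at hj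
        simp [Nat.choose_eq_zero_of_lt (Nat.lt_of_succ_le hj)])]
    have h1 : ((1 - ρ) + ρ) ^ m = 1 := by norm_num
    have h2 : ∑ j ∈ Finset.range (m + 1), (m.choose j : ℝ) * (1 - ρ) ^ j * ρ ^ (m - j) = 1 := by
      rw [Finset.sum_congr rfl
        (fun j _ => by ring :
          ∀ j ∈ Finset.range (m + 1),
            (m.choose j : ℝ) * (1 - ρ) ^ j * ρ ^ (m - j)
              = (1 - ρ) ^ j * ρ ^ (m - j) * (m.choose j : ℝ)), ← add_pow, h1]
    exact h2.symm
  · rfl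

/-- Lemma 1: For `f ∈ L¹(𝕋)`, `r ∈ ℕ`, `ϱ ∈ [0,1)`, `x ∈ 𝕋`:
`A_{ϱ,r}(f)(x) = ∑_{k=0}^{r-1} (∂^k f(ϱ,x)/∂ϱ^k)·(1-ϱ)^k/k!`. -/
theorem ATAP_eq_taylor (f : AddCircle (2 * π) → ℂ) (hf : Integrable f haarAddCircle)
    (r : ℕ) (hr : 1 ≤ r) (ρ : ℝ) (hρ : ρ ∈ Set.Ico (0 : ℝ) 1) (x : AddCircle (2 * π)) :
    ATAP r ρ f x
      = ∑ k ∈ Finset.range r,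
          pderivR k f ρ x * (((1 - ρ) ^ k / (k.factorial : ℝ) : ℝ) : ℂ) := by
  obtain ⟨hρ0, hρ1⟩ := hρ
  set c : ℤ → ℂ := fun k => fourierCoeff f k * fourier k x with hc
  set M : ℝ := ∫ t, ‖f t‖ ∂haarAddCircle with hMdef
  have hfour : ∀ (n : ℤ) (t : AddCircle (2 * π)), ‖fourier n t‖ = 1 := fun n t =>
    Circle.norm_coe _
  have hM : ∀ k : ℤ, ‖c k‖ ≤ M := by
    intro k
    have h2 : ‖fourierCoeff f k‖ ≤ M := by
      rw [fourierCoeff]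
      refine le_trans (norm_integral_le_integral_norm _) (le_of_eq ?_)
      refine integral_congr_ae (Filter.Eventually.of_forall fun t => ?_)
      show ‖fourier (-k) t • f t‖ = ‖f t‖
      rw [norm_smul, hfour, one_mul]
    calc ‖c k‖ = ‖fourierCoeff f k‖ * ‖fourier k x‖ := norm_mul _ _
      _ = ‖fourierCoeff f k‖ := by rw [hfour, mul_one]
      _ ≤ M := h2
  have hρa : |ρ| < 1 := by rwa [abs_of_nonneg hρ0]
  have hPI : (fun t : ℝ => poissonIntegral f t x)
      = fun s : ℝ => ∑' k : ℤ, s ^ k.natAbs • c k := by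
    funext s
    rw [poissonIntegral]
    exact tsum_congr fun k => by rw [hc, mul_assoc, Complex.real_smul, Complex.ofReal_pow]
  have hD : ∀ j : ℕ, pderivR j f ρ x
      = ∑' k : ℤ, ((k.natAbs.descFactorial j : ℝ) * ρ ^ (k.natAbs - j)) • c k := by
    intro j; rw [pderivR, hPI]; exact key_deriv c M hM j ρ hρa
  have hb0 : (0:ℝ) < (ρ + 1) / 2 := by linarith
  have hb1 : (ρ + 1) / 2 < 1 := by linarith
  have hρb : |ρ| ≤ (ρ + 1) / 2 := by rw [abs_of_nonneg hρ0]; linarith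
  have hS : ∀ j : ℕ,
      Summable (fun k : ℤ => ((k.natAbs.descFactorial j : ℝ) * ρ ^ (k.natAbs - j)) • c k) :=
    fun j => Summable.of_norm_bounded (aux_summable M j hb0 hb1)
      (fun k => aux_norm_le c M hM j k hρb hb0.le)
  symm
  calc ∑ j ∈ Finset.range r, pderivR j f ρ x * (((1 - ρ) ^ j / (j.factorial : ℝ) : ℝ) : ℂ)
      = ∑ j ∈ Finset.range r, ∑' k : ℤ,
          (((k.natAbs.descFactorial j : ℝ) * ρ ^ (k.natAbs - j)) • c k)
            * (((1 - ρ) ^ j / (j.factorial : ℝ) : ℝ) : ℂ) := by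
        refine Finset.sum_congr rfl fun j _ => ?_
        rw [hD j, tsum_mul_right]
    _ = ∑' k : ℤ, ∑ j ∈ Finset.range r,
          (((k.natAbs.descFactorial j : ℝ) * ρ ^ (k.natAbs - j)) • c k)
            * (((1 - ρ) ^ j / (j.factorial : ℝ) : ℝ) : ℂ) :=
        (Summable.tsum_finsetSum (fun j _ => (hS j).mul_right _)).symm
    _ = ATAP r ρ f x := by
        rw [ATAP]
        refine tsum_congr fun k => ?_
        have hstep : ∀ j ∈ Finset.range r,
            (((k.natAbs.descFactorial j : ℝ) * ρ ^ (k.natAbs - j)) • c k)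
              * (((1 - ρ) ^ j / (j.factorial : ℝ) : ℝ) : ℂ)
            = (((k.natAbs.descFactorial j : ℝ) * ρ ^ (k.natAbs - j)
                * ((1 - ρ) ^ j / (j.factorial : ℝ)) : ℝ) : ℂ) * c k := by
          intro j _
          rw [Complex.real_smul]
          push_cast
          ring
        rw [Finset.sum_congr rfl hstep, ← Finset.sum_mul, ← Complex.ofReal_sum,
          ← lam_eq r k.natAbs ρ, hc, mul_assoc]

end
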